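/- Right extension lemma: let Φ₀ be a finite set of formulas closed under subformulas and under ∼. For any subsets u, v ⊆ Φ₀ and set of formulas w such that the pair (u,v) is w-consistent in ℜ_d, there exists a subset v' ⊆ Φ₀ with v ⊆ v' such that v' is consistent in ℜ_d, v' is complete (for every φ ∈ Φ₀, φ ∈ v' or ∼φ ∈ v'), and the pair (u,v') is w-consistent in ℜ_d. -/

import Mathlib

/-- Formulas of the modal language 𝓛: propositional variables, ⊥, →, and ▷. -/
inductive Formula : Type
  | var : ℕ → Formula
  | bot : Formula
  | imp : Formula → Formula → Formula
  | tri : Formula → Formula → Formula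
deriving DecidableEq

namespace Formula

/-- ¬φ := φ → ⊥ -/
def neg (φ : Formula) : Formula := imp φ bot
/-- ⊤ := ¬⊥ -/
def top : Formula := neg bot
/-- φ ∨ ψ := ¬φ → ψ -/
def disj (φ ψ : Formula) : Formula := imp (neg φ) ψ
/-- φ ∧ ψ := ¬(φ → ¬ψ) -/
def conj (φ ψ : Formula) : Formula := neg (imp φ (neg ψ))

/-- `φ` is a substitution instance of a classical propositional tautology:
it evaluates to `true` under every boolean valuation of formulas that
respects `⊥` and `→` (variables and `▷`-formulas are treated as atoms). -/
def IsPropTaut (φ : Formula) : Prop :=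
  ∀ v : Formula → Bool, v bot = false →
    (∀ a b, v (imp a b) = (!(v a) || v b)) → v φ = true

/-- Hilbert-style provability.  `Prv false` is the logic ℜ (axioms: classical
tautologies, A1, A2, A3; rules: Modus Ponens and monotonicity M);
`Prv true` is the logic ℜ_d, which additionally has axiom A4. -/
inductive Prv : Bool → Formula → Prop
  | taut {d : Bool} {φ} : IsPropTaut φ → Prv d φ
  | a1 {d : Bool} (φ ψ χ) : Prv d (imp (tri φ ψ) (imp (tri χ ψ) (tri (disj φ χ) ψ)))
  | a2 {d : Bool} (φ) : Prv d (tri bot φ)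
  | a3 {d : Bool} (φ) : Prv d (tri φ top)
  | a4 (φ ψ χ) : Prv true (imp (tri φ ψ) (imp (tri φ χ) (tri φ (conj ψ χ))))
  | mp {d : Bool} {φ ψ} : Prv d (imp φ ψ) → Prv d φ → Prv d ψ
  | mono {d : Bool} {φ₁ φ₂ ψ₁ ψ₂} : Prv d (imp φ₁ φ₂) → Prv d (imp ψ₁ ψ₂) →
      Prv d (imp (tri φ₂ ψ₁) (tri φ₁ ψ₂))

/-- `Deriv d Δ φ`: φ is derivable from the hypotheses Δ together with all
theorems of the logic (`Prv d`) using only Modus Ponens. -/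
inductive Deriv (d : Bool) (Δ : Set Formula) : Formula → Prop
  | hyp {φ} : φ ∈ Δ → Deriv d Δ φ
  | thm {φ} : Prv d φ → Deriv d Δ φ
  | mp {φ ψ} : Deriv d Δ (imp φ ψ) → Deriv d Δ φ → Deriv d Δ ψ

/-- Conjunction of a list of formulas (empty conjunction is ⊤). -/
def conjList : List Formula → Formula
  | [] => top
  | φ :: l => conj φ (conjList l)

/-- ⋀Γ : conjunction of all formulas of a finite set Γ (⋀∅ = ⊤). -/
noncomputable def bigConj (Γ : Finset Formula) : Formula := conjList Γ.toList

/-- A set of formulas is consistent if ⊥ is not derivable from it. -/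
def Consistent (d : Bool) (Δ : Set Formula) : Prop := ¬ Deriv d Δ bot

/-- The pair (u,v) is w-consistent: w ⊬ ⋀u ▷ ¬⋀v. -/
def WCons (d : Bool) (w : Set Formula) (u v : Finset Formula) : Prop :=
  ¬ Deriv d w (tri (bigConj u) (neg (bigConj v)))

/-- The operation ∼: ∼(¬φ) = φ, and ∼φ = ¬φ if φ is not a negation. -/
def simNeg : Formula → Formula
  | imp φ bot => φ
  | φ => neg φ

/-- Φ is closed under subformulas. -/
def SubClosed (Φ : Finset Formula) : Prop :=
  (∀ a b, imp a b ∈ Φ → a ∈ Φ ∧ b ∈ Φ) ∧ (∀ a b, tri a b ∈ Φ → a ∈ Φ ∧ b ∈ Φ)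

/-- Φ is closed under the operation ∼. -/
def SimClosed (Φ : Finset Formula) : Prop := ∀ φ ∈ Φ, simNeg φ ∈ Φ

/-- w is a maximal consistent subset of Φ: w ⊆ Φ, w is consistent, and for
every φ ∈ Φ either φ ∈ w or ∼φ ∈ w. -/
def MaxCons (d : Bool) (Φ : Finset Formula) (w : Finset Formula) : Prop :=
  w ⊆ Φ ∧ Consistent d ↑w ∧ ∀ φ ∈ Φ, φ ∈ w ∨ simNeg φ ∈ w

/-- Kripke forcing: `rel w u v` means u →_w v, `val w p` means w ⊩ p. -/
def Forces {W : Type*} (rel : W → W → W → Prop) (val : W → ℕ → Prop) :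
    W → Formula → Prop
  | w, var p => val w p
  | _, bot => False
  | w, imp a b => Forces rel val w a → Forces rel val w b
  | w, tri a b => ∀ u v, rel w u v → Forces rel val u a →
      ∃ v', rel w u v' ∧ Forces rel val v' b

end Formula

/-- A Kripke model: a finite set of worlds, a ternary computability relation,
and a forcing relation between worlds and propositional variables. -/
structure KripkeModel where
  W : Type
  fin : Finite W
  rel : W → W → W → Prop
  val : W → ℕ → Prop

/-- A Kripke model is deterministic if for all worlds w, u there is at most
one v with u →_w v. -/
def KripkeModel.Deterministic (M : KripkeModel) : Prop :=
  ∀ w u v v', M.rel w u v → M.rel w u v' → v = v'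

/-- Forcing in a Kripke model. -/
def KripkeModel.Forces (M : KripkeModel) : M.W → Formula → Prop :=
  Formula.Forces M.rel M.val

/-- The standard enumeration of nondeterministic partial recursive functions:
ζ_w(u) = the set of possible outputs of machine (code) w on input u. -/
def zeta (w u : ℕ) : Set ℕ :=
  {v | ((Denumerable.ofNat Nat.Partrec.Code w).eval (Nat.pair u v)).Dom}

/-- The standard enumeration of deterministic partial recursive functions:
ξ_w(u) = the value of the partial recursive function with code w on input u. -/
def xi (w u : ℕ) : Part ℕ :=
  (Denumerable.ofNat Nat.Partrec.Code w).eval u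

namespace Formula

/-- Set semantics for nondeterministic partial recursive functions
(existential reading of ▷). -/
def semN (val : ℕ → Set ℕ) : Formula → Set ℕ
  | var p => val p
  | bot => ∅
  | imp a b => (Set.univ \ semN val a) ∪ semN val b
  | tri a b => {w | ∀ u ∈ semN val a, zeta w u ≠ ∅ → zeta w u ∩ semN val b ≠ ∅}

/-- Set semantics for deterministic partial recursive functions. -/
def semD (val : ℕ → Set ℕ) : Formula → Set ℕ
  | var p => val p
  | bot => ∅
  | imp a b => (Set.univ \ semD val a) ∪ semD val b
  | tri a b => {w | ∀ u ∈ semD val a, ∀ h : (xi w u).Dom, (xi w u).get h ∈ semD val b}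

/-- Universal set semantics for nondeterministic partial recursive functions:
every terminating computation path from φ* ends in ψ*. -/
def semU (val : ℕ → Set ℕ) : Formula → Set ℕ
  | var p => val p
  | bot => ∅
  | imp a b => (Set.univ \ semU val a) ∪ semU val b
  | tri a b => {w | ∀ u ∈ semU val a, zeta w u ⊆ semU val b}

/-- A canonical injective encoding of formulas as natural numbers. -/
def enc : Formula → ℕ
  | var n => 4 * n
  | bot => 1
  | imp a b => 4 * Nat.pair (enc a) (enc b) + 2
  | tri a b => 4 * Nat.pair (enc a) (enc b) + 3

end Formula

namespace RightExt

open Formula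

section Tauts
variable {d : Bool}

lemma prv_imp_self (a : Formula) : Prv d (imp a a) := by
  apply Prv.taut; intro f hb hi
  simp only [hi]; cases f a <;> rfl

lemma prv_K (a b : Formula) : Prv d (imp a (imp b a)) := by
  apply Prv.taut; intro f hb hi
  simp only [hi]; cases f a <;> cases f b <;> rfl

lemma prv_S (c a b : Formula) :
    Prv d (imp (imp c (imp a b)) (imp (imp c a) (imp c b))) := by
  apply Prv.taut; intro f hb hi
  simp only [hi]; cases f a <;> cases f b <;> cases f c <;> rfl

lemma prv_comp (a b c : Formula) :
    Prv d (imp (imp a b) (imp (imp b c) (imp a c))) := by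
  apply Prv.taut; intro f hb hi
  simp only [hi]; cases f a <;> cases f b <;> cases f c <;> rfl

lemma prv_conj_left (a b : Formula) : Prv d (imp (conj a b) a) := by
  apply Prv.taut; intro f hb hi
  simp only [Formula.conj, Formula.neg, hi, hb]
  cases f a <;> cases f b <;> rfl

lemma prv_conj_right (a b : Formula) : Prv d (imp (conj a b) b) := by
  apply Prv.taut; intro f hb hi
  simp only [Formula.conj, Formula.neg, hi, hb]
  cases f a <;> cases f b <;> rfl

lemma prv_imp_conj (c a b : Formula) :
    Prv d (imp (imp c a) (imp (imp c b) (imp c (conj a b)))) := by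
  apply Prv.taut; intro f hb hi
  simp only [Formula.conj, Formula.neg, hi, hb]
  cases f a <;> cases f b <;> cases f c <;> rfl

lemma prv_top (c : Formula) : Prv d (imp c Formula.top) := by
  apply Prv.taut; intro f hb hi
  simp only [Formula.top, Formula.neg, hi, hb]
  cases f c <;> rfl

lemma prv_split1 (c p : Formula) :
    Prv d (imp c (disj (conj p c) (conj (Formula.neg p) c))) := by
  apply Prv.taut; intro f hb hi
  simp only [Formula.disj, Formula.conj, Formula.neg, hi, hb]
  cases f c <;> cases f p <;> rfl

lemma prv_split2 (c p : Formula) :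
    Prv d (imp c (disj (conj (Formula.neg p) c) (conj p c))) := by
  apply Prv.taut; intro f hb hi
  simp only [Formula.disj, Formula.conj, Formula.neg, hi, hb]
  cases f c <;> cases f p <;> rfl

lemma prv_combine (c x y a b : Formula) :
    Prv d (imp (imp c (disj x y)) (imp (imp x a) (imp (imp y b)
      (imp (conj (Formula.neg a) (Formula.neg b)) (Formula.neg c))))) := by
  apply Prv.taut; intro f hb hi
  simp only [Formula.disj, Formula.conj, Formula.neg, hi, hb]
  cases f c <;> cases f x <;> cases f y <;> cases f a <;> cases f b <;> rfl

end Tauts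

lemma conjList_mem {d : Bool} {φ : Formula} :
    ∀ {l : List Formula}, φ ∈ l → Prv d (imp (conjList l) φ)
  | a :: l, h => by
    rcases List.mem_cons.1 h with rfl | h
    · exact prv_conj_left _ _
    · exact Prv.mp (Prv.mp (prv_comp _ _ _) (prv_conj_right _ _)) (conjList_mem h)

lemma conjList_imp {d : Bool} :
    ∀ (l₁ l₂ : List Formula), (∀ x ∈ l₁, x ∈ l₂) →
      Prv d (imp (conjList l₂) (conjList l₁))
  | [], _, _ => prv_top _
  | a :: l₁, l₂, h =>
    Prv.mp (Prv.mp (prv_imp_conj _ _ _) (conjList_mem (h a (List.mem_cons_self))))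
      (conjList_imp l₁ l₂ fun x hx => h x (List.mem_cons_of_mem a hx))

lemma deriv_to_prv {d : Bool} {ψ : Formula} {s : Finset Formula}
    (h : Deriv d (↑s : Set Formula) ψ) : Prv d (imp (bigConj s) ψ) := by
  induction h with
  | hyp hφ =>
    exact conjList_mem (Finset.mem_toList.2 (by exact_mod_cast hφ))
  | thm hp => exact Prv.mp (prv_K _ _) hp
  | mp _ _ ih1 ih2 => exact Prv.mp (Prv.mp (prv_S _ _ _) ih1) ih2

lemma wcons_consistent {w : Set Formula} {u v : Finset Formula}
    (h : WCons true w u v) : Consistent true (↑v : Set Formula) := by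
  intro hc
  apply h
  have h1 : Prv true (imp (bigConj v) bot) := deriv_to_prv hc
  have h2 : Prv true (imp Formula.top (Formula.neg (bigConj v))) :=
    Prv.mp (prv_K _ _) h1
  exact Deriv.mp (Deriv.thm (Prv.mono (prv_imp_self _) h2)) (Deriv.thm (Prv.a3 _))

lemma simNeg_cases (φ : Formula) :
    simNeg φ = Formula.neg φ ∨ ∃ χ, φ = Formula.neg χ ∧ simNeg φ = χ := by
  cases φ with
  | var n => left; rfl
  | bot => left; rfl
  | tri a b => left; rfl
  | imp a b =>
    cases b with
    | bot => right; exact ⟨a, rfl, rfl⟩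
    | var n => left; rfl
    | imp x y => left; rfl
    | tri x y => left; rfl

lemma insert_imp {d : Bool} (φ : Formula) (v : Finset Formula) :
    Prv d (imp (conj φ (bigConj v)) (bigConj (insert φ v))) := by
  have : conj φ (bigConj v) = conjList (φ :: v.toList) := rfl
  rw [this]
  exact conjList_imp _ _ fun x hx => by
    rcases Finset.mem_insert.1 (Finset.mem_toList.1 hx) with rfl | hx
    · exact List.mem_cons_self
    · exact List.mem_cons_of_mem _ (Finset.mem_toList.2 hx)

lemma step {w : Set Formula} {u v : Finset Formula} (φ : Formula)
    (h : WCons true w u v) :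
    WCons true w u (insert φ v) ∨ WCons true w u (insert (simNeg φ) v) := by
  by_contra hc
  push_neg at hc
  obtain ⟨h1, h2⟩ := hc
  unfold WCons at h1 h2
  rw [not_not] at h1 h2
  apply h
  set ψ := simNeg φ with hψ
  set C := bigConj v
  set A := bigConj (insert φ v)
  set B := bigConj (insert ψ v)
  have hA : Prv true (imp (conj φ C) A) := insert_imp φ v
  have hB : Prv true (imp (conj ψ C) B) := insert_imp ψ v
  have hsplit : Prv true (imp C (disj (conj φ C) (conj ψ C))) := by
    rcases simNeg_cases φ with he | ⟨χ, he1, he2⟩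
    · rw [hψ, he]; exact prv_split1 _ _
    · rw [hψ, he2, he1]; exact prv_split2 _ _
  have hcomb : Prv true (imp (conj (Formula.neg A) (Formula.neg B)) (Formula.neg C)) :=
    Prv.mp (Prv.mp (Prv.mp (prv_combine _ _ _ _ _) hsplit) hA) hB
  have hD : Deriv true w (tri (bigConj u) (conj (Formula.neg A) (Formula.neg B))) :=
    Deriv.mp (Deriv.mp (Deriv.thm (Prv.a4 _ _ _)) h1) h2
  exact Deriv.mp (Deriv.thm (Prv.mono (prv_imp_self _) hcomb)) hD

lemma extend (w : Set Formula) (u : Finset Formula) :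
    ∀ (l : List Formula) (v : Finset Formula), WCons true w u v →
      ∃ v' : Finset Formula, v ⊆ v' ∧
        (∀ φ ∈ l, φ ∈ v' ∨ simNeg φ ∈ v') ∧
        (∀ x ∈ v', x ∈ v ∨ ∃ φ ∈ l, x = φ ∨ x = simNeg φ) ∧
        WCons true w u v'
  | [], v, h => ⟨v, Finset.Subset.refl v, by simp, fun x hx => Or.inl hx, h⟩
  | φ :: l, v, h => by
    rcases step φ h with h' | h'
    · obtain ⟨v', hsub, hcomp, hcont, hw⟩ := extend w u l (insert φ v) h'
      refine ⟨v', fun x hx => hsub (Finset.mem_insert_of_mem hx), ?_, ?_, hw⟩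
      · intro χ hχ
        rcases List.mem_cons.1 hχ with rfl | hχ
        · exact Or.inl (hsub (Finset.mem_insert_self _ _))
        · exact hcomp χ hχ
      · intro x hx
        rcases hcont x hx with hx' | ⟨χ, hχ, hx'⟩
        · rcases Finset.mem_insert.1 hx' with rfl | hx''
          · exact Or.inr ⟨x, List.mem_cons_self, Or.inl rfl⟩
          · exact Or.inl hx''
        · exact Or.inr ⟨χ, List.mem_cons_of_mem _ hχ, hx'⟩
    · obtain ⟨v', hsub, hcomp, hcont, hw⟩ := extend w u l (insert (simNeg φ) v) h'
      refine ⟨v', fun x hx => hsub (Finset.mem_insert_of_mem hx), ?_, ?_, hw⟩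
      · intro χ hχ
        rcases List.mem_cons.1 hχ with rfl | hχ
        · exact Or.inr (hsub (Finset.mem_insert_self _ _))
        · exact hcomp χ hχ
      · intro x hx
        rcases hcont x hx with hx' | ⟨χ, hχ, hx'⟩
        · rcases Finset.mem_insert.1 hx' with rfl | hx''
          · exact Or.inr ⟨φ, List.mem_cons_self, Or.inr rfl⟩
          · exact Or.inl hx''
        · exact Or.inr ⟨χ, List.mem_cons_of_mem _ hχ, hx'⟩

end RightExt

open Formula in
/-- Right extension lemma: a w-consistent (in ℜ_d) pair (u,v) of subsets of a
finite, subformula- and ∼-closed set Φ₀ can be extended on the right to a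
complete consistent subset v' of Φ₀ keeping (u,v') w-consistent. -/
theorem right_extension (Φ₀ : Finset Formula)
    (hsub : SubClosed Φ₀) (hsim : SimClosed Φ₀)
    (u v : Finset Formula) (hu : u ⊆ Φ₀) (hv : v ⊆ Φ₀)
    (w : Set Formula) (h : WCons true w u v) :
    ∃ v' : Finset Formula, v' ⊆ Φ₀ ∧ v ⊆ v' ∧
      Consistent true (↑v' : Set Formula) ∧
      (∀ φ ∈ Φ₀, φ ∈ v' ∨ simNeg φ ∈ v') ∧
      WCons true w u v' := by
  obtain ⟨v', hsub, hcomp, hcont, hw⟩ := RightExt.extend w u Φ₀.toList v h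
  refine ⟨v', ?_, hsub, RightExt.wcons_consistent hw, ?_, hw⟩
  · intro x hx
    rcases hcont x hx with hx' | ⟨φ, hφ, rfl | rfl⟩
    · exact hv hx'
    · exact Finset.mem_toList.1 hφ
    · exact hsim _ (Finset.mem_toList.1 hφ)
  · intro φ hφ
    exact hcomp φ (Finset.mem_toList.2 hφ)
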